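/- Let T = Σ_{i=1}^{2r} ξ_i where ξ_1,...,ξ_r are independent geometric random variables on ℕ with parameters αq_1,...,αq_r (i.e. P(ξ = x) = (αq_i)^x(1 - αq_i)) and ξ_{r+1},...,ξ_{2r} are independent geometric random variables with parameters αq_1^{-1},...,αq_r^{-1}, all independent. Then for every m ∈ ℕ, P(T = m) = α^m · a(q) · s_{γ_m}^{2r}(q), where a(q) = Π_{i=1}^r (1 - αq_i)(1 - αq_i^{-1}), γ_m = (m,0,...,0) ∈ ℕ^r, and s_{γ_m}^{2r} is the symplectic Schur function. -/

import Mathlib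

/-- Length of the (0-indexed) `i`-th row of a symplectic Gelfand–Tsetlin pattern
(row `i` corresponds to `x^{i+1}` in the paper, of length `⌊(i+2)/2⌋`). -/
def rowLen (i : ℕ) : ℕ := (i + 2) / 2

/-- A symplectic Gelfand–Tsetlin pattern of depth `k`: rows `x 0, …, x (k-1)` of
nonnegative integers (entries outside the pattern are `0`), with consecutive rows
interlacing: `x i j ≤ x (i+1) j` and `x (i+1) (j+1) ≤ x i j`. -/
structure SGT (k : ℕ) where
  x : ℕ → ℕ → ℕ
  zero_outside : ∀ i j, (k ≤ i ∨ rowLen i ≤ j) → x i j = 0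
  le_above : ∀ i j, i + 1 < k → j < rowLen i → x i j ≤ x (i+1) j
  above_le : ∀ i j, i + 1 < k → j + 1 < rowLen (i+1) → x (i+1) (j+1) ≤ x i j

/-- Sum `|x^{i+1}|` of the coordinates of row `i` of a pattern. -/
def rowSum {k : ℕ} (P : SGT k) (i : ℕ) : ℕ := ∑ j ∈ Finset.range (rowLen i), P.x i j

/-- The monomial weight `w_x^k(q)` of a symplectic Gelfand–Tsetlin pattern. -/
noncomputable def weight {k : ℕ} (P : SGT k) (q : ℕ → ℝ) : ℝ :=
  ∏ i ∈ Finset.range k,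
    q (i / 2) ^ ((if i % 2 = 0 then (1 : ℤ) else -1) *
      ((rowSum P i : ℤ) - (if i = 0 then 0 else (rowSum P (i - 1) : ℤ))))

/-- The symplectic Schur function `s_λ^k(q)`, a (finite) sum of weights over all
patterns of depth `k` with top row `λ`. -/
noncomputable def schur (k : ℕ) (lam : ℕ → ℕ) (q : ℕ → ℝ) : ℝ :=
  ∑ᶠ P ∈ {P : SGT k | ∀ j, P.x (k - 1) j = lam j}, weight P q

open Finset

theorem prod_range_two_mul {M : Type*} [CommMonoid M] (n : ℕ) (f : ℕ → M) :
    ∏ u ∈ range (2*n), f u = ∏ j ∈ range n, (f (2*j) * f (2*j+1)) := by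
  induction n with
  | zero => simp
  | succ n ih =>
    have h : 2 * (n+1) = (2*n) + 1 + 1 := by ring
    rw [h, prod_range_succ, prod_range_succ, ih, prod_range_succ, mul_assoc]

theorem sum_range_two_mul {M : Type*} [AddCommMonoid M] (n : ℕ) (f : ℕ → M) :
    ∑ u ∈ range (2*n), f u = ∑ j ∈ range n, (f (2*j) + f (2*j+1)) := by
  induction n with
  | zero => simp
  | succ n ih =>
    have h : 2 * (n+1) = (2*n) + 1 + 1 := by ring
    rw [h, sum_range_succ, sum_range_succ, ih, sum_range_succ, add_assoc]

namespace SGTaux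

variable {r : ℕ}

/-- Extension of a tuple to `ℕ`. -/
def D (d : Fin (2*r) → ℕ) (n : ℕ) : ℕ := if h : n < 2*r then d ⟨n,h⟩ else 0

/-- Interleaved increments. -/
def E (d : Fin (2*r) → ℕ) (u : ℕ) : ℕ := if u % 2 = 0 then D d (u/2) else D d (r + u/2)

/-- Partial sums. -/
def T (d : Fin (2*r) → ℕ) (i : ℕ) : ℕ := ∑ u ∈ range (i+1), E d u

lemma T_succ (d : Fin (2*r) → ℕ) (i : ℕ) : T d (i+1) = T d i + E d (i+1) := by
  rw [T, T, Finset.sum_range_succ]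

lemma T_zero (d : Fin (2*r) → ℕ) : T d 0 = E d 0 := by simp [T]

lemma T_mono (d : Fin (2*r) → ℕ) (i : ℕ) : T d i ≤ T d (i+1) := by
  rw [T_succ]; omega

lemma E_even (d : Fin (2*r) → ℕ) (j : ℕ) : E d (2*j) = D d j := by
  have h1 : (2*j) % 2 = 0 := by omega
  have h2 : (2*j) / 2 = j := by omega
  simp [E, h1, h2]

lemma E_odd (d : Fin (2*r) → ℕ) (j : ℕ) : E d (2*j+1) = D d (r + j) := by
  have h1 : (2*j+1) % 2 = 1 := by omega
  have h2 : (2*j+1) / 2 = j := by omega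
  simp [E, h1, h2]

lemma sum_D (d : Fin (2*r) → ℕ) : ∑ n ∈ range (2*r), D d n = ∑ i, d i := by
  rw [← Fin.sum_univ_eq_sum_range (fun n => D d n) (2*r)]
  exact Finset.sum_congr rfl fun i _ => by simp [D, i.isLt]

lemma T_top (d : Fin (2*r) → ℕ) (hr : 0 < r) : T d (2*r - 1) = ∑ i, d i := by
  have h : 2*r - 1 + 1 = 2*r := by omega
  rw [T, h, sum_range_two_mul, ← sum_D d]
  have h2 : 2*r = r + r := by ring
  rw [h2, Finset.sum_range_add, ← Finset.sum_add_distrib]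
  exact Finset.sum_congr rfl fun j _ => by rw [E_even, E_odd]

/-- The pattern associated to a tuple of increments. -/
def Phi (d : Fin (2*r) → ℕ) : SGT (2*r) where
  x i j := if i < 2*r ∧ j = 0 then T d i else 0
  zero_outside i j h := by
    rcases h with h | h
    · simp [Nat.not_lt.mpr h]
    · have : j ≠ 0 := by unfold rowLen at h; omega
      simp [this]
  le_above i j hi hj := by
    by_cases hj0 : j = 0
    · subst hj0
      simp only [show i < 2*r by omega, hi, true_and, if_pos, and_true]
      exact T_mono d i
    · simp [hj0]
  above_le i j hi hj := by simp

lemma Phi_x (d : Fin (2*r) → ℕ) (i j : ℕ) :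
    (Phi d).x i j = if i < 2*r ∧ j = 0 then T d i else 0 := rfl

lemma rowLen_pos (i : ℕ) : 0 < rowLen i := by unfold rowLen; omega

lemma rowSum_Phi (d : Fin (2*r) → ℕ) (i : ℕ) (hi : i < 2*r) :
    rowSum (Phi d) i = T d i := by
  unfold rowSum
  rw [Finset.sum_eq_single 0]
  · simp [Phi_x, hi]
  · intro j _ hj; simp [Phi_x, hj]
  · intro h; exact absurd (Finset.mem_range.mpr (rowLen_pos i)) h


lemma weight_Phi (Q : ℕ → ℝ) (hQ : ∀ j, j < r → Q j ≠ 0) (d : Fin (2*r) → ℕ) :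
    weight (Phi d) Q = ∏ j ∈ range r, Q j ^ ((D d j : ℤ) - (D d (r+j) : ℤ)) := by
  unfold weight
  have step1 : ∀ i ∈ range (2*r),
      Q (i / 2) ^ ((if i % 2 = 0 then (1 : ℤ) else -1) *
        ((rowSum (Phi d) i : ℤ) - (if i = 0 then 0 else (rowSum (Phi d) (i - 1) : ℤ))))
      = Q (i / 2) ^ ((if i % 2 = 0 then (1 : ℤ) else -1) * (E d i : ℤ)) := by
    intro i hi
    rw [Finset.mem_range] at hi
    congr 2
    rcases Nat.eq_zero_or_pos i with h0 | h0
    · subst h0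
      rw [rowSum_Phi d 0 hi, T_zero]
      simp
    · have hne : i ≠ 0 := by omega
      rw [rowSum_Phi d i hi, rowSum_Phi d (i-1) (by omega), if_neg hne]
      have := T_succ d (i-1)
      rw [show i - 1 + 1 = i by omega] at this
      rw [this]
      push_cast
      ring
  rw [Finset.prod_congr rfl step1, prod_range_two_mul]
  refine Finset.prod_congr rfl fun j hj => ?_
  rw [Finset.mem_range] at hj
  have h1 : (2*j) % 2 = 0 := by omega
  have h2 : (2*j) / 2 = j := by omega
  have h3 : (2*j+1) % 2 = 1 := by omega
  have h4 : (2*j+1) / 2 = j := by omega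
  rw [h1, h2, h3, h4, E_even, E_odd]
  rw [if_neg (one_ne_zero), neg_one_mul, ← zpow_add₀ (hQ j hj), sub_eq_add_neg]
  norm_num

lemma Phi_inj : Function.Injective (Phi (r := r)) := by
  intro d d' h
  have hx : ∀ i j, (Phi d).x i j = (Phi d').x i j := fun i j => by rw [h]
  have hT : ∀ i, i < 2*r → T d i = T d' i := by
    intro i hi
    have := hx i 0
    simpa [Phi_x, hi] using this
  have hE : ∀ u, u < 2*r → E d u = E d' u := by
    intro u hu
    cases u with
    | zero =>
      have := hT 0 hu
      rwa [T_zero, T_zero] at this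
    | succ v =>
      have h1 := hT v (by omega)
      have h2 := hT (v+1) hu
      rw [T_succ, T_succ] at h2
      omega
  have hD : ∀ n, n < 2*r → D d n = D d' n := by
    intro n hn
    by_cases hnr : n < r
    · have := hE (2*n) (by omega)
      rwa [E_even, E_even] at this
    · have := hE (2*(n-r)+1) (by omega)
      rw [E_odd, E_odd, show r + (n - r) = n by omega] at this
      exact this
  funext i
  have := hD i i.isLt
  simpa [D, i.isLt] using this

lemma SGT_ext {k : ℕ} {P P' : SGT k} (h : P.x = P'.x) : P = P' := by
  cases P; cases P'; cases h; rfl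

lemma col_zero (m : ℕ) (P : SGT (2*r))
    (htop : ∀ j, P.x (2*r-1) j = if j = 0 then m else 0)
    (i j : ℕ) (hj : j ≠ 0) : P.x i j = 0 := by
  by_cases hi : 2*r ≤ i
  · exact P.zero_outside i j (Or.inl hi)
  have H : ∀ n i, i = 2*r-1-n → ∀ j, j ≠ 0 → P.x i j = 0 := by
    intro n
    induction n with
    | zero =>
      intro i hi j hj
      subst hi
      simp only [Nat.sub_zero]
      rw [htop j, if_neg hj]
    | succ n ih =>
      intro i hi j hj
      by_cases heq : 2*r-1-(n+1) = 2*r-1-n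
      · exact ih i (by omega) j hj
      · have hi2 : i + 1 < 2*r := by omega
        by_cases hjl : j < rowLen i
        · have h1 := P.le_above i j hi2 hjl
          have h2 := ih (i+1) (by omega) j hj
          omega
        · exact P.zero_outside i j (Or.inr (by omega))
  exact H (2*r-1-i) i (by omega) j hj

lemma setEq (m : ℕ) :
    {P : SGT (2*r) | ∀ j, P.x (2*r - 1) j = if j = 0 then m else 0} =
      Phi '' {d : Fin (2*r) → ℕ | ∑ i, d i = m} := by
  ext P
  constructor
  · intro hP
    set t : ℕ → ℕ := fun n => P.x n 0 with ht_def
    have htmono : ∀ n, n + 1 < 2*r → t n ≤ t (n+1) :=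
      fun n hn => P.le_above n 0 hn (rowLen_pos n)
    set e : ℕ → ℕ := fun u => t u - (if u = 0 then 0 else t (u-1)) with he_def
    set d : Fin (2*r) → ℕ := fun i =>
      e (if (i:ℕ) < r then 2*(i:ℕ) else 2*((i:ℕ)-r)+1) with hd_def
    have htel : ∀ n, n < 2*r → ∑ u ∈ range (n+1), e u = t n := by
      intro n
      induction n with
      | zero => intro _; simp [he_def]
      | succ n ih =>
        intro hn
        rw [Finset.sum_range_succ, ih (by omega)]
        have := htmono n hn
        simp only [he_def]
        rw [if_neg (by omega : ¬ n + 1 = 0)]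
        simp only [Nat.add_sub_cancel]
        omega
    have hEe : ∀ u, u < 2*r → E d u = e u := by
      intro u hu
      by_cases hpar : u % 2 = 0
      · have hur : u / 2 < r := by omega
        rw [E, if_pos hpar, D, dif_pos (by omega : u/2 < 2*r)]
        simp only [hd_def]
        rw [if_pos hur, show 2*(u/2) = u by omega]
      · have hur : u / 2 < r := by omega
        rw [E, if_neg hpar, D, dif_pos (by omega : r + u/2 < 2*r)]
        simp only [hd_def]
        rw [if_neg (by omega : ¬ r + u/2 < r),
          show 2*((r + u/2) - r)+1 = u by omega]
    have hTt : ∀ n, n < 2*r → T d n = t n := by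
      intro n hn
      rw [T, ← htel n hn]
      refine Finset.sum_congr rfl fun u hu => ?_
      rw [Finset.mem_range] at hu
      exact hEe u (by omega)
    refine ⟨d, ?_, ?_⟩
    · show ∑ i, d i = m
      rcases Nat.eq_zero_or_pos r with hr | hr
      · subst hr
        have h0 := hP 0
        rw [P.zero_outside _ 0 (Or.inl (by omega))] at h0
        simp at h0 ⊢
        omega
      · rw [← T_top d hr, hTt (2*r-1) (by omega)]
        have h0 := hP 0
        rw [if_pos rfl] at h0
        exact h0
    · refine SGT_ext ?_
      funext i j
      rw [Phi_x]
      by_cases hc : i < 2*r ∧ j = 0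
      · rw [if_pos hc, hTt i hc.1, hc.2]
      · rw [if_neg hc]
        rcases Decidable.not_and_iff_or_not.mp hc with h | h
        · exact (P.zero_outside i j (Or.inl (by omega))).symm
        · exact (col_zero m P hP i j h).symm
  · rintro ⟨d, hd, rfl⟩
    intro j
    rcases Nat.eq_zero_or_pos r with hr | hr
    · subst hr
      have hm : m = 0 := by simpa using hd.symm
      rw [Phi_x, if_neg (by omega), hm]
      simp
    · rw [Phi_x]
      by_cases hj : j = 0
      · subst hj
        rw [if_pos ⟨by omega, rfl⟩, if_pos rfl, T_top d hr, hd]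
      · rw [if_neg (by simp [hj]), if_neg hj]

end SGTaux

lemma schur_eq (r m : ℕ) (Q : ℕ → ℝ) (hQ : ∀ j, j < r → Q j ≠ 0) :
    schur (2*r) (fun j => if j = 0 then m else 0) Q
      = ∑ d ∈ Finset.Nat.antidiagonalTuple (2*r) m,
          ∏ j ∈ Finset.range r, Q j ^ ((SGTaux.D d j : ℤ) - (SGTaux.D d (r+j) : ℤ)) := by
  unfold schur
  have hset : {P : SGT (2*r) | ∀ j, P.x (2*r - 1) j = (fun j => if j = 0 then m else 0) j}
      = SGTaux.Phi '' ↑(Finset.Nat.antidiagonalTuple (2*r) m) := by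
    rw [SGTaux.setEq m]
    ext d
    simp [Finset.Nat.mem_antidiagonalTuple]
  rw [hset, finsum_mem_image (SGTaux.Phi_inj.injOn), finsum_mem_coe_finset]
  exact Finset.sum_congr rfl fun d _ => SGTaux.weight_Phi Q hQ d

open MeasureTheory

/-- The law of `T = ξ_1 + … + ξ_{2r}`, a sum of independent geometric random
variables with parameters `αq_1,…,αq_r, αq_1⁻¹,…,αq_r⁻¹`, is
`ν(m) = α^m a(q) s_{γ_m}^{2r}(q)`. -/
theorem law_of_sum_geometric (r : ℕ) (q : Fin r → ℝ) (α : ℝ)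
    (hα : 0 < α) (hα1 : α < 1) (hq : ∀ i, 0 < q i)
    (h1 : ∀ i, α * q i < 1) (h2 : ∀ i, α / q i < 1)
    {Ω : Type*} [MeasurableSpace Ω] (ℙ : Measure Ω) [IsProbabilityMeasure ℙ]
    (ξ : Fin (2 * r) → Ω → ℕ)
    (hmeas : ∀ i, Measurable (ξ i))
    (hindep : ProbabilityTheory.iIndepFun ξ ℙ)
    (hlaw : ∀ i : Fin (2 * r), ∀ x : ℕ,
      ℙ {ω | ξ i ω = x} = ENNReal.ofReal
        (if h : (i : ℕ) < r then
            (α * q ⟨i, h⟩) ^ x * (1 - α * q ⟨i, h⟩)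
          else
            (α / q ⟨(i : ℕ) - r, by have := i.isLt; omega⟩) ^ x *
              (1 - α / q ⟨(i : ℕ) - r, by have := i.isLt; omega⟩))) :
    ∀ m : ℕ,
      ℙ {ω | (∑ i, ξ i ω) = m} =
        ENNReal.ofReal (α ^ m * (∏ i, (1 - α * q i) * (1 - α / q i)) *
          schur (2 * r) (fun j => if j = 0 then m else 0)
            (fun j => if h : j < r then q ⟨j, h⟩ else 1)) := by
  intro m
  classical
  set Q : ℕ → ℝ := fun j => if h : j < r then q ⟨j, h⟩ else 1 with hQdef
  have hQpos : ∀ j, 0 < Q j := by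
    intro j
    by_cases h : j < r <;> simp [hQdef, h, hq]
  have hQeq : ∀ j (h : j < r), Q j = q ⟨j, h⟩ := by
    intro j h; simp [hQdef, h]
  set A := Finset.Nat.antidiagonalTuple (2*r) m with hA
  -- the parameter function
  set p : ℕ → ℝ := fun n => if n < r then α * Q n else α / Q (n - r) with hpdef
  have hppos : ∀ n, 0 < p n := by
    intro n
    by_cases h : n < r
    · simp only [hpdef, if_pos h]
      exact mul_pos hα (hQpos n)
    · simp only [hpdef, if_neg h]
      exact div_pos hα (hQpos (n - r))
  have hplt : ∀ n < 2*r, p n < 1 := by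
    intro n hn
    by_cases h : n < r
    · simp only [hpdef, if_pos h]
      rw [hQeq n h]; exact h1 _
    · simp only [hpdef, if_neg h]
      rw [hQeq (n - r) (by omega)]; exact h2 _
  -- decompose the event
  have hdecomp : {ω | (∑ i, ξ i ω) = m} = ⋃ d ∈ A, ⋂ i, {ω | ξ i ω = d i} := by
    ext ω
    simp only [Set.mem_setOf_eq, Set.mem_iUnion, Set.mem_iInter]
    constructor
    · intro h
      exact ⟨fun i => ξ i ω, Finset.Nat.mem_antidiagonalTuple.mpr h, fun i => rfl⟩
    · rintro ⟨d, hd, h⟩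
      rw [← Finset.Nat.mem_antidiagonalTuple.mp hd]
      exact Finset.sum_congr rfl fun i _ => h i
  have hdisj : (↑A : Set (Fin (2*r) → ℕ)).PairwiseDisjoint
      (fun d => ⋂ i, {ω | ξ i ω = d i}) := by
    intro d _ d' _ hne
    refine Set.disjoint_left.mpr fun ω hω hω' => hne ?_
    simp only [Set.mem_iInter, Set.mem_setOf_eq] at hω hω'
    funext i
    rw [← hω i, ← hω' i]
  have hmeasSets : ∀ d ∈ A, MeasurableSet (⋂ i, {ω | ξ i ω = d i}) :=
    fun d _ => MeasurableSet.iInter fun i => (hmeas i) (measurableSet_singleton (d i))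
  rw [hdecomp, measure_biUnion_finset hdisj hmeasSets]
  -- independence: product formula
  have hprod : ∀ d : Fin (2*r) → ℕ,
      ℙ (⋂ i, {ω | ξ i ω = d i}) = ∏ i, ℙ {ω | ξ i ω = d i} :=
    fun d => hindep.meas_iInter fun i => ⟨{d i}, measurableSet_singleton (d i), rfl⟩
  -- each factor as real
  have hfac : ∀ (d : Fin (2*r) → ℕ) (i : Fin (2*r)),
      ℙ {ω | ξ i ω = d i} = ENNReal.ofReal (p i ^ (d i) * (1 - p i)) := by
    intro d i
    rw [hlaw i (d i)]
    congr 1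
    by_cases h : (i : ℕ) < r
    · rw [dif_pos h]
      simp only [hpdef, if_pos h, hQeq _ h]
    · rw [dif_neg h]
      have hir : (i : ℕ) - r < r := by have := i.isLt; omega
      simp only [hpdef, if_neg h, hQeq _ hir]
  have hfacnn : ∀ (n x : ℕ), n < 2*r → 0 ≤ p n ^ x * (1 - p n) := by
    intro n x hn
    have h3 := hppos n
    have h4 := hplt n hn
    have : (0:ℝ) ≤ p n ^ x := pow_nonneg h3.le x
    nlinarith
  calc ∑ d ∈ A, ℙ (⋂ i, {ω | ξ i ω = d i})
      = ∑ d ∈ A, ENNReal.ofReal (∏ i : Fin (2*r), p i.val ^ (d i) * (1 - p i.val)) := by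
        refine Finset.sum_congr rfl fun d _ => ?_
        rw [hprod d, ENNReal.ofReal_prod_of_nonneg (fun (i : Fin (2*r)) _ => hfacnn i.val (d i) i.isLt)]
        exact Finset.prod_congr rfl fun i _ => hfac d i
    _ = ENNReal.ofReal (∑ d ∈ A, ∏ i : Fin (2*r), p i.val ^ (d i) * (1 - p i.val)) := by
        rw [ENNReal.ofReal_sum_of_nonneg]
        intro d _
        exact Finset.prod_nonneg fun (i : Fin (2*r)) _ => hfacnn i.val (d i) i.isLt
    _ = ENNReal.ofReal (α ^ m * (∏ i, (1 - α * q i) * (1 - α / q i)) *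
          schur (2 * r) (fun j => if j = 0 then m else 0) Q) := by
        congr 1
        rw [schur_eq r m Q (fun j _ => (hQpos j).ne'), Finset.mul_sum]
        refine Finset.sum_congr rfl fun d hd => ?_
        have hdm : ∑ i, d i = m := Finset.Nat.mem_antidiagonalTuple.mp hd
        have split_prod : ∀ f : ℕ → ℝ, ∏ n ∈ Finset.range (2*r), f n
            = (∏ j ∈ Finset.range r, f j) * ∏ j ∈ Finset.range r, f (r+j) := by
          intro f
          rw [show 2*r = r + r by ring, Finset.prod_range_add]
        have split_sum : ∀ f : ℕ → ℕ, ∑ n ∈ Finset.range (2*r), f n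
            = (∑ j ∈ Finset.range r, f j) + ∑ j ∈ Finset.range r, f (r+j) := by
          intro f
          rw [show 2*r = r + r by ring, Finset.sum_range_add]
        have hL : ∏ i : Fin (2*r), p i.val ^ (d i) * (1 - p i.val)
            = ∏ n ∈ Finset.range (2*r), p n ^ (SGTaux.D d n) * (1 - p n) := by
          rw [← Fin.prod_univ_eq_prod_range (fun n => p n ^ (SGTaux.D d n) * (1 - p n)) (2*r)]
          refine Finset.prod_congr rfl fun i _ => ?_
          rw [show SGTaux.D d ↑i = d i by simp [SGTaux.D, i.isLt]]
        have hm2 : m = (∑ j ∈ Finset.range r, SGTaux.D d j)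
            + ∑ j ∈ Finset.range r, SGTaux.D d (r+j) := by
          rw [← split_sum, SGTaux.sum_D, hdm]
        have ha : (∏ i, (1 - α * q i) * (1 - α / q i))
            = ∏ j ∈ Finset.range r, (1 - α * Q j) * (1 - α / Q j) := by
          rw [← Fin.prod_univ_eq_prod_range (fun j => (1 - α * Q j) * (1 - α / Q j)) r]
          refine Finset.prod_congr rfl fun i _ => ?_
          rw [hQeq ↑i i.isLt, Fin.eta]
        rw [hL, split_prod, ha, hm2]
        have hp1 : ∀ j ∈ Finset.range r, p j ^ (SGTaux.D d j) * (1 - p j)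
            = (α * Q j) ^ (SGTaux.D d j) * (1 - α * Q j) := by
          intro j hj
          rw [Finset.mem_range] at hj
          simp only [hpdef, if_pos hj]
        have hp2 : ∀ j ∈ Finset.range r, p (r+j) ^ (SGTaux.D d (r+j)) * (1 - p (r+j))
            = (α / Q j) ^ (SGTaux.D d (r+j)) * (1 - α / Q j) := by
          intro j hj
          simp only [hpdef, if_neg (by omega : ¬ r + j < r), Nat.add_sub_cancel_left]
        rw [Finset.prod_congr rfl hp1, Finset.prod_congr rfl hp2,
          pow_add, ← Finset.prod_pow_eq_pow_sum, ← Finset.prod_pow_eq_pow_sum,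
          ← Finset.prod_mul_distrib, ← Finset.prod_mul_distrib,
          ← Finset.prod_mul_distrib, ← Finset.prod_mul_distrib]
        refine Finset.prod_congr rfl fun j _ => ?_
        have hc := (hQpos j).ne'
        rw [zpow_sub₀ hc, zpow_natCast, zpow_natCast, mul_pow, div_pow]
        field_simp
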